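/- For every n ≥ 1, the Hirzebruch–Jung continued fraction expansion [3, 3, ..., 3, 2] with (n−1) threes followed by a single 2 equals F(2n+1)/F(2n-1), where [a1,...,ak] := a1 − 1/(a2 − 1/(··· − 1/ak)) and F denotes the odd-indexed Fibonacci numbers with F(1)=1, F(3)=2, F(2n+3)=3F(2n+1)−F(2n-1). -/
import Mathlib


/-- `oddFib n = F(2n+1)`, the odd-indexed Fibonacci numbers:
`F(1) = 1`, `F(3) = 2`, `F(2n+3) = 3·F(2n+1) − F(2n-1)`. -/
def oddFib : ℕ → ℤ
  | 0 => 1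
  | 1 => 2
  | n + 2 => 3 * oddFib (n + 1) - oddFib n

/-- Hirzebruch–Jung continued fraction `[a1,...,ak] = a1 - 1/(a2 - 1/(... - 1/ak))`.
(Note `hj [a] = a` since `1/0 = 0` in `ℚ`.) -/
def hj : List ℚ → ℚ
  | [] => 0
  | a :: l => a - 1 / hj l

lemma oddFib_lt (n : ℕ) : 0 < oddFib n ∧ oddFib n < oddFib (n + 1) := by
  induction n with
  | zero => simp [oddFib]
  | succ m ih =>
    obtain ⟨h1, h2⟩ := ih
    refine ⟨by linarith, ?_⟩
    show oddFib (m + 1) < 3 * oddFib (m + 1) - oddFib m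
    linarith

lemma oddFib_pos (n : ℕ) : 0 < oddFib n := (oddFib_lt n).1

lemma hj_aux (m : ℕ) :
    hj (List.replicate m 3 ++ [2]) = (oddFib (m + 1) : ℚ) / (oddFib m : ℚ) := by
  induction m with
  | zero => norm_num [hj, oddFib]
  | succ k ih =>
    have hk : (oddFib k : ℚ) ≠ 0 := by exact_mod_cast (oddFib_pos k).ne'
    have hk1 : (oddFib (k + 1) : ℚ) ≠ 0 := by exact_mod_cast (oddFib_pos (k + 1)).ne'
    rw [List.replicate_succ, List.cons_append]
    show (3 : ℚ) - 1 / hj (List.replicate k 3 ++ [2]) = _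
    rw [ih]
    have : oddFib (k + 2) = 3 * oddFib (k + 1) - oddFib k := rfl
    push_cast [this]
    field_simp

theorem hj_oddFib (n : ℕ) (hn : 1 ≤ n) :
    hj (List.replicate (n - 1) 3 ++ [2]) = (oddFib n : ℚ) / (oddFib (n - 1) : ℚ) := by
  obtain ⟨m, rfl⟩ := Nat.exists_eq_add_of_le hn
  rw [add_comm 1 m]
  simpa using hj_aux m
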